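/- Let D be a 2-(v, k, λ) design with replication number r = λ(v−1)/(k−1) and b = λv(v−1)/(k(k−1)) blocks. For any set S of points and any set L of blocks, the number i(S,L) of incident (point, block) pairs with point in S and block in L satisfies |i(S,L) − r|S||L|/b| ≤ √(r−λ)·√(|S||L|(1 − |S|/v)(1 − |L|/b)). -/

import Mathlib

/-- The incidence bound (expander mixing lemma) for 2-(v,k,λ) designs. -/
theorem design_incidence_bound (X B : Type*) [Fintype X] [Fintype B]
    (blk : B → Finset X) (v k lam r b : ℕ)
    (hv : Fintype.card X = v) (hb : Fintype.card B = b)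
    (hv0 : 0 < v) (hk : 2 ≤ k) (hlam0 : 0 < lam)
    (hksize : ∀ β : B, (blk β).card = k)
    (hlam : ∀ x y : X, x ≠ y → Nat.card {β : B // x ∈ blk β ∧ y ∈ blk β} = lam)
    (hr : ∀ x : X, Nat.card {β : B // x ∈ blk β} = r)
    (S : Finset X) (Lset : Finset B) :
    |(Nat.card {p : X × B // p.1 ∈ S ∧ p.2 ∈ Lset ∧ p.1 ∈ blk p.2} : ℝ)
        - (r : ℝ) * S.card * Lset.card / b|
      ≤ Real.sqrt ((r : ℝ) - lam) *
        Real.sqrt ((S.card : ℝ) * Lset.card * (1 - (S.card : ℝ) / v) * (1 - (Lset.card : ℝ) / b)) := by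
  classical
  -- dispose of the degenerate case b = 0
  rcases Nat.eq_zero_or_pos b with hb0 | hbpos
  · have hBempty : IsEmpty B := by
      rw [← Fintype.card_eq_zero_iff, hb, hb0]
    have hL : Lset = ∅ := Finset.eq_empty_of_isEmpty Lset
    have : Nat.card {p : X × B // p.1 ∈ S ∧ p.2 ∈ Lset ∧ p.1 ∈ blk p.2} = 0 := by
      rw [Nat.card_eq_fintype_card, Fintype.card_eq_zero_iff]
      exact ⟨fun p => hBempty.false p.1.2⟩
    rw [this, hL, hb0]
    simp [Real.sqrt_nonneg]
  -- the nondegenerate case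
  have hBne : Nonempty B := by
    rw [← Fintype.card_pos_iff, hb]; exact hbpos
  obtain ⟨β0⟩ := hBne
  -- counts as finset cards
  have hrc : ∀ x : X, (Finset.univ.filter (fun β => x ∈ blk β)).card = r := by
    intro x
    rw [← Fintype.card_subtype, ← Nat.card_eq_fintype_card, hr]
  have hlamc : ∀ x y : X, x ≠ y →
      (Finset.univ.filter (fun β => x ∈ blk β ∧ y ∈ blk β)).card = lam := by
    intro x y hxy
    rw [← Fintype.card_subtype, ← Nat.card_eq_fintype_card, hlam x y hxy]
  -- incidence count as a sum
  have hi : Nat.card {p : X × B // p.1 ∈ S ∧ p.2 ∈ Lset ∧ p.1 ∈ blk p.2}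
      = ∑ β ∈ Lset, (S ∩ blk β).card := by
    rw [Nat.card_eq_fintype_card, Fintype.card_subtype, Finset.card_filter,
      Fintype.sum_prod_type, Finset.sum_comm]
    have h1 : ∀ β : B, (∑ x : X, if x ∈ S ∧ β ∈ Lset ∧ x ∈ blk β then 1 else 0)
        = if β ∈ Lset then (S ∩ blk β).card else 0 := by
      intro β
      by_cases hβ : β ∈ Lset
      · simp only [hβ, true_and, and_true, if_true]
        rw [← Finset.card_filter]
        congr 1
        ext x; simp [and_comm]
      · simp [hβ]
    rw [Finset.sum_congr rfl (fun β _ => h1 β)]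
    simp [Finset.sum_ite_mem]
  -- first moment
  have hsum1 : ∑ β : B, (S ∩ blk β).card = S.card * r := by
    have h1 : ∀ β : B, (S ∩ blk β).card = ∑ x ∈ S, if x ∈ blk β then 1 else 0 := by
      intro β
      rw [← Finset.sum_filter, Finset.sum_const, smul_eq_mul, mul_one, Finset.filter_mem_eq_inter]
    rw [Finset.sum_congr rfl fun β _ => h1 β, Finset.sum_comm]
    rw [Finset.sum_congr rfl (fun x (_ : x ∈ S) => by rw [← Finset.card_filter, hrc x])]
    rw [Finset.sum_const, smul_eq_mul]
  -- second moment
  have hsum2 : ∑ β : B, (S ∩ blk β).card ^ 2 = S.card * (r + (S.card - 1) * lam) := by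
    have h1 : ∀ β : B, (S ∩ blk β).card ^ 2
        = ∑ x ∈ S, ∑ y ∈ S, if x ∈ blk β ∧ y ∈ blk β then 1 else 0 := by
      intro β
      have : (S ∩ blk β).card = ∑ x ∈ S, if x ∈ blk β then 1 else 0 := by
        rw [← Finset.sum_filter, Finset.sum_const, smul_eq_mul, mul_one,
          Finset.filter_mem_eq_inter]
      rw [this, sq, Finset.sum_mul_sum]
      refine Finset.sum_congr rfl fun x _ => Finset.sum_congr rfl fun y _ => ?_
      by_cases h1 : x ∈ blk β <;> by_cases h2 : y ∈ blk β <;> simp [h1, h2]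
    rw [Finset.sum_congr rfl fun β _ => h1 β, Finset.sum_comm,
      Finset.sum_congr rfl fun x _ => Finset.sum_comm]
    have h2 : ∀ x ∈ S, (∑ y ∈ S, ∑ β : B, if x ∈ blk β ∧ y ∈ blk β then 1 else 0)
        = r + (S.card - 1) * lam := by
      intro x hx
      have hcnt : ∀ y : X, (∑ β : B, if x ∈ blk β ∧ y ∈ blk β then 1 else 0)
          = (Finset.univ.filter (fun β => x ∈ blk β ∧ y ∈ blk β)).card := by
        intro y; rw [← Finset.card_filter]
      rw [Finset.sum_congr rfl fun y _ => hcnt y, ← Finset.add_sum_erase _ _ hx]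
      congr 1
      · rw [← hrc x]; congr 1; ext β; simp
      · rw [Finset.sum_congr rfl (fun y hy => hlamc x y (Ne.symm (Finset.ne_of_mem_erase hy))),
          Finset.sum_const, smul_eq_mul, Finset.card_erase_of_mem hx]
    rw [Finset.sum_congr rfl h2, Finset.sum_const, smul_eq_mul]
  -- counting relations
  have hrel1 : v * r = b * k := by
    calc v * r = ∑ x : X, r := by rw [Finset.sum_const, Finset.card_univ, hv, smul_eq_mul]
      _ = ∑ x : X, ∑ β : B, (if x ∈ blk β then 1 else 0) := by
          refine Finset.sum_congr rfl fun x _ => ?_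
          rw [← Finset.card_filter, hrc x]
      _ = ∑ β : B, ∑ x : X, (if x ∈ blk β then 1 else 0) := Finset.sum_comm
      _ = ∑ β : B, k := by
          refine Finset.sum_congr rfl fun β _ => ?_
          rw [← Finset.card_filter, Finset.filter_mem_eq_inter, Finset.univ_inter, hksize]
      _ = b * k := by rw [Finset.sum_const, Finset.card_univ, hb, smul_eq_mul]
  have hrel2 : lam * (v - 1) = r * (k - 1) := by
    have hne : Nonempty X := by
      rw [← Fintype.card_pos_iff, hv]; exact hv0
    obtain ⟨x⟩ := hne
    calc lam * (v-1) = ∑ y ∈ Finset.univ.erase x, lam := by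
          rw [Finset.sum_const, Finset.card_erase_of_mem (Finset.mem_univ x), Finset.card_univ,
            hv, smul_eq_mul, mul_comm]
      _ = ∑ y ∈ Finset.univ.erase x, ∑ β : B, (if x ∈ blk β ∧ y ∈ blk β then 1 else 0) := by
          refine Finset.sum_congr rfl fun y hy => ?_
          rw [← Finset.card_filter, hlamc x y (Ne.symm (Finset.ne_of_mem_erase hy))]
      _ = ∑ β : B, ∑ y ∈ Finset.univ.erase x, (if x ∈ blk β ∧ y ∈ blk β then 1 else 0) :=
          Finset.sum_comm
      _ = ∑ β : B, (if x ∈ blk β then k - 1 else 0) := by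
          refine Finset.sum_congr rfl fun β _ => ?_
          by_cases hx : x ∈ blk β
          · simp only [hx, true_and, if_true]
            rw [← Finset.card_filter]
            have : (Finset.univ.erase x).filter (fun y => y ∈ blk β) = (blk β).erase x := by
              ext y; simp [and_comm]
            rw [this, Finset.card_erase_of_mem hx, hksize]
          · simp [hx]
      _ = r * (k - 1) := by
          rw [Finset.sum_ite, Finset.sum_const, Finset.sum_const, hrc x, smul_eq_mul,
            smul_eq_mul, mul_zero, add_zero]
  -- k ≤ v and lam ≤ r
  have hkv : k ≤ v := by
    rw [← hksize β0, ← hv, ← Finset.card_univ]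
    exact Finset.card_le_card (Finset.subset_univ _)
  have hlr : lam ≤ r := by
    have h1 : lam * (k - 1) ≤ r * (k - 1) := by
      rw [← hrel2]
      exact Nat.mul_le_mul_left lam (Nat.sub_le_sub_right hkv 1)
    have h2 : 0 < k - 1 := by omega
    exact Nat.le_of_mul_le_mul_right h1 h2
  -- real versions of the moments (before abbreviations)
  have hsum1R : ∑ β : B, ((S ∩ blk β).card : ℝ) = (S.card : ℝ) * r := by
    rw [← Nat.cast_sum, hsum1]; push_cast; ring
  have hsum2R : ∑ β : B, ((S ∩ blk β).card : ℝ) ^ 2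
      = (S.card : ℝ) * r + ((S.card : ℝ)^2 - S.card) * lam := by
    rcases Nat.eq_zero_or_pos S.card with h0 | h1
    · have hS : S = ∅ := Finset.card_eq_zero.mp h0
      simp [hS]
    · have := hsum2
      have hc : ((S.card - 1 : ℕ) : ℝ) = (S.card : ℝ) - 1 := by
        rw [Nat.cast_sub h1, Nat.cast_one]
      calc ∑ β : B, ((S ∩ blk β).card : ℝ) ^ 2
          = ((∑ β : B, (S ∩ blk β).card ^ 2 : ℕ) : ℝ) := by push_cast; ring
        _ = ((S.card * (r + (S.card - 1) * lam) : ℕ) : ℝ) := by rw [hsum2]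
        _ = (S.card : ℝ) * r + ((S.card : ℝ)^2 - S.card) * lam := by
            push_cast [hc]; ring
  -- real versions of the relations
  have hrel1R : (v:ℝ) * r = (b:ℝ) * k := by exact_mod_cast hrel1
  have hrel2R : (lam:ℝ) * ((v:ℝ) - 1) = (r:ℝ) * ((k:ℝ) - 1) := by
    have := congrArg (Nat.cast (R := ℝ)) hrel2
    rwa [Nat.cast_mul, Nat.cast_mul, Nat.cast_sub hv0, Nat.cast_sub (by omega : 1 ≤ k),
      Nat.cast_one] at this
  -- real abbreviations
  set s : ℝ := (S.card : ℝ) with hs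
  set l : ℝ := (Lset.card : ℝ) with hl
  have hbR : (0:ℝ) < b := by exact_mod_cast hbpos
  have hvR : (0:ℝ) < v := by exact_mod_cast hv0
  have hbne : (b:ℝ) ≠ 0 := ne_of_gt hbR
  have hvne : (v:ℝ) ≠ 0 := ne_of_gt hvR
  -- the vectors
  set f : B → ℝ := fun β => ((S ∩ blk β).card : ℝ) - r * s / b with hf
  set g : B → ℝ := fun β => (if β ∈ Lset then (1:ℝ) else 0) - l / b with hg
  have hcardB : ((Finset.univ : Finset B).card : ℝ) = b := by
    rw [Finset.card_univ, hb]
  -- sum of f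
  have hf0 : ∑ β : B, f β = 0 := by
    rw [hf, Finset.sum_sub_distrib, hsum1R, Finset.sum_const, nsmul_eq_mul, hcardB]
    field_simp
    ring
  -- sum of f * g
  have hfg : ∑ β : B, f β * g β
      = (∑ β ∈ Lset, ((S ∩ blk β).card : ℝ)) - r * s * l / b := by
    have expand : ∀ β : B, f β * g β
        = f β * (if β ∈ Lset then (1:ℝ) else 0) - (l / b) * f β := by
      intro β; rw [hg]; ring
    rw [Finset.sum_congr rfl fun β _ => expand β, Finset.sum_sub_distrib, ← Finset.mul_sum,
      hf0, mul_zero, sub_zero]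
    have : ∀ β : B, f β * (if β ∈ Lset then (1:ℝ) else 0)
        = if β ∈ Lset then f β else 0 := by
      intro β; by_cases hβ : β ∈ Lset <;> simp [hβ]
    rw [Finset.sum_congr rfl fun β _ => this β, Finset.sum_ite_mem, Finset.univ_inter,
      hf, Finset.sum_sub_distrib, Finset.sum_const, nsmul_eq_mul]
    rw [hl]
    ring
  -- sum of f ^ 2
  have hf2 : ∑ β : B, f β ^ 2 = ((r:ℝ) - lam) * (s * (1 - s / v)) := by
    have expand : ∀ β : B, f β ^ 2
        = ((S ∩ blk β).card : ℝ)^2 - 2 * (r * s / b) * ((S ∩ blk β).card : ℝ)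
            + (r * s / b)^2 := by
      intro β; rw [hf]; ring
    rw [Finset.sum_congr rfl fun β _ => expand β, Finset.sum_add_distrib,
      Finset.sum_sub_distrib, hsum2R, ← Finset.mul_sum, hsum1R, Finset.sum_const,
      nsmul_eq_mul, hcardB]
    field_simp
    linear_combination (-(s^2*(r:ℝ))) * hrel1R + ((b:ℝ)*s^2) * hrel2R
  -- sum of g ^ 2
  have hg2 : ∑ β : B, g β ^ 2 = l * (1 - l / b) := by
    have expand : ∀ β : B, g β ^ 2
        = (if β ∈ Lset then (1:ℝ) else 0) - 2 * (l / b) * (if β ∈ Lset then (1:ℝ) else 0)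
            + (l / b)^2 := by
      intro β; rw [hg]; by_cases hβ : β ∈ Lset <;> simp [hβ] <;> ring
    rw [Finset.sum_congr rfl fun β _ => expand β, Finset.sum_add_distrib,
      Finset.sum_sub_distrib, ← Finset.mul_sum, Finset.sum_ite_mem, Finset.univ_inter,
      Finset.sum_const, Finset.sum_const, nsmul_eq_mul, nsmul_eq_mul, hcardB, mul_one]
    rw [hl]
    field_simp
    ring
  -- nonnegativity facts
  have hsv : s ≤ (v:ℝ) := by
    have : S.card ≤ v := by
      rw [← hv, ← Finset.card_univ]; exact Finset.card_le_card (Finset.subset_univ S)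
    rw [hs]; exact_mod_cast this
  have hlb : l ≤ (b:ℝ) := by
    have : Lset.card ≤ b := by
      rw [← hb, ← Finset.card_univ]; exact Finset.card_le_card (Finset.subset_univ Lset)
    rw [hl]; exact_mod_cast this
  have hs0 : 0 ≤ s := by rw [hs]; positivity
  have hl0 : 0 ≤ l := by rw [hl]; positivity
  have hsv' : 0 ≤ 1 - s / v := by
    rw [sub_nonneg, div_le_one hvR]; exact hsv
  have hlb' : 0 ≤ 1 - l / b := by
    rw [sub_nonneg, div_le_one hbR]; exact hlb
  have hrlam : (0:ℝ) ≤ (r:ℝ) - lam := by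
    rw [sub_nonneg]; exact_mod_cast hlr
  -- Cauchy-Schwarz
  have hCS := Finset.sum_mul_sq_le_sq_mul_sq Finset.univ f g
  have habs : |∑ β : B, f β * g β| ≤ Real.sqrt ((∑ β : B, f β ^ 2) * ∑ β : B, g β ^ 2) := by
    rw [← Real.sqrt_sq_eq_abs]
    exact Real.sqrt_le_sqrt hCS
  -- rewrite the goal
  have hgoal_lhs : (Nat.card {p : X × B // p.1 ∈ S ∧ p.2 ∈ Lset ∧ p.1 ∈ blk p.2} : ℝ)
      - (r : ℝ) * S.card * Lset.card / b = ∑ β : B, f β * g β := by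
    rw [hfg, hi, Nat.cast_sum, ← hs, ← hl]
  rw [hgoal_lhs]
  refine le_trans habs ?_
  rw [hf2, hg2]
  rw [show ((r:ℝ) - lam) * (s * (1 - s / v)) * (l * (1 - l / b))
      = ((r:ℝ) - lam) * ((s * l * (1 - s / v) * (1 - l / b))) by ring]
  rw [Real.sqrt_mul hrlam]
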